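/- For programs P, Q over a finite universe U and alphabets H, B ⊆ U, the following are equivalent: (1) the ⟨H,B⟩-containment P ⊆_{⟨H,B⟩} Q fails (i.e., there exists R ∈ C_{⟨H,B⟩} with AS(P∪R) ⊄ AS(Q∪R)); (2) there exists a unary program R ∈ C_{⟨H,B⟩} with AS(P∪R) ⊄ AS(Q∪R); (3) there exists a witness against P ⊆_{⟨H,B⟩} Q. -/

import Mathlib

structure Rule (α : Type*) where
  head : Finset α
  pbody : Finset α
  nbody : Finset α
deriving DecidableEq

abbrev Program (α : Type*) := Finset (Rule α)

variable {α : Type*} [DecidableEq α]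

/-- An interpretation `Y` satisfies a rule. -/
def satRule (Y : Finset α) (r : Rule α) : Prop :=
  r.pbody ⊆ Y → r.nbody ∩ Y = ∅ → (r.head ∩ Y).Nonempty

/-- `Y` is a model of the program `P`. -/
def satProg (Y : Finset α) (P : Program α) : Prop := ∀ r ∈ P, satRule Y r

/-- The Gelfond–Lifschitz reduct `P^Y`. -/
def reduct (P : Program α) (Y : Finset α) : Program α :=
  (P.filter (fun r => r.nbody ∩ Y = ∅)).image (fun r => ⟨r.head, r.pbody, ∅⟩)

/-- `Y` is an answer set of `P`: a minimal model of `P^Y`. -/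
def isAS (P : Program α) (Y : Finset α) : Prop :=
  satProg Y (reduct P Y) ∧ ∀ Z, Z ⊂ Y → ¬ satProg Z (reduct P Y)

def heads (P : Program α) : Finset α := P.biUnion Rule.head
def bodies (P : Program α) : Finset α := P.biUnion (fun r => r.pbody ∪ r.nbody)

/-- A positive program: no default negation. -/
def Positive (P : Program α) : Prop := ∀ r ∈ P, r.nbody = ∅

/-- A unary program: only facts `a ←` and rules `a ← b`. -/
def Unary (P : Program α) : Prop :=
  ∀ r ∈ P, r.nbody = ∅ ∧ r.head.card = 1 ∧ r.pbody.card ≤ 1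

/-- Membership in the class `C_⟨H,B⟩`. -/
def inClass (H B : Finset α) (P : Program α) : Prop := heads P ⊆ H ∧ bodies P ⊆ B

/-- `V ⪯_H^B Z`. -/
def preceq (H B V Z : Finset α) : Prop := V ∩ H ⊆ Z ∩ H ∧ Z ∩ B ⊆ V ∩ B

/-- `V ≺_H^B Z`. -/
def prec (H B V Z : Finset α) : Prop := preceq H B V Z ∧ V ∩ (H ∪ B) ≠ Z ∩ (H ∪ B)

/-- `Y` is an `H`-total model of `P`. -/
def Htotal (H : Finset α) (P : Program α) (Y : Finset α) : Prop :=
  satProg Y P ∧ ∀ Z, Z ⊂ Y → satProg Z (reduct P Y) → Z ∩ H ⊂ Y ∩ H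

/-- The containment `P ⊆_⟨H,B⟩ Q`. -/
def containsHB (H B : Finset α) (P Q : Program α) : Prop :=
  ∀ R : Program α, inClass H B R → ∀ Y, isAS (P ∪ R) Y → isAS (Q ∪ R) Y

/-- The equivalence `P ≡_⟨H,B⟩ Q`. -/
def equivHB (H B : Finset α) (P Q : Program α) : Prop :=
  ∀ R : Program α, inClass H B R → ∀ Y, isAS (P ∪ R) Y ↔ isAS (Q ∪ R) Y

/-- A witness against `P ⊆_⟨H,B⟩ Q`. -/
def Witness (H B : Finset α) (P Q : Program α) (X Y : Finset α) : Prop :=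
  X ⊆ Y ∧ Htotal H P Y ∧
    (satProg Y Q → X ⊂ Y ∧ satProg X (reduct Q Y) ∧
      ∀ X', preceq H B X X' → X' ⊂ Y → ¬ satProg X' (reduct P Y))

/-- `(X,Y)` is `⪯_H^B`-maximal for `P`. -/
def maximalHB (H B : Finset α) (P : Program α) (X Y : Finset α) : Prop :=
  satProg X (reduct P Y) ∧ ∀ X', prec H B X X' → X' ⊂ Y → ¬ satProg X' (reduct P Y)

/-- `(X,Y)` is an `⟨H,B⟩`-model of `P`. -/
def HBmodel (H B : Finset α) (P : Program α) (X Y : Finset α) : Prop :=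
  X ⊆ Y ∧ Htotal H P Y ∧
    (X ⊂ Y → ∃ X', X' ⊂ Y ∧ X' ∩ (H ∪ B) = X ∧ maximalHB H B P X' Y)

lemma mem_reduct {P : Program α} {Y : Finset α} {r' : Rule α} :
    r' ∈ reduct P Y ↔ ∃ r ∈ P, r.nbody ∩ Y = ∅ ∧ r' = ⟨r.head, r.pbody, ∅⟩ := by
  simp only [reduct, Finset.mem_image, Finset.mem_filter]
  constructor
  · rintro ⟨r, ⟨hr, hn⟩, rfl⟩; exact ⟨r, hr, hn, rfl⟩
  · rintro ⟨r, hr, hn, rfl⟩; exact ⟨r, ⟨hr, hn⟩, rfl⟩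

lemma satProg_union {Z : Finset α} {P Q : Program α} :
    satProg Z (P ∪ Q) ↔ satProg Z P ∧ satProg Z Q := by
  simp [satProg, Finset.mem_union, or_imp, forall_and]

lemma reduct_union {P Q : Program α} {Y : Finset α} :
    reduct (P ∪ Q) Y = reduct P Y ∪ reduct Q Y := by
  simp [reduct, Finset.filter_union, Finset.image_union]

lemma satProg_reduct_self {P : Program α} {Y : Finset α} :
    satProg Y (reduct P Y) ↔ satProg Y P := by
  constructor
  · intro h r hr hp hn
    have hm : (⟨r.head, r.pbody, ∅⟩ : Rule α) ∈ reduct P Y := mem_reduct.mpr ⟨r, hr, hn, rfl⟩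
    exact h (⟨r.head, r.pbody, ∅⟩ : Rule α) hm hp (by simp)
  · intro h r' hr'
    obtain ⟨r, hr, hn, rfl⟩ := mem_reduct.mp hr'
    intro hp _
    exact h r hr hp hn

lemma head_subset_of_inClass {R : Program α} {H B : Finset α} (h : inClass H B R)
    {r : Rule α} (hr : r ∈ R) : r.head ⊆ H :=
  fun x hx => h.1 (Finset.mem_biUnion.mpr ⟨r, hr, hx⟩)

lemma pbody_subset_of_inClass {R : Program α} {H B : Finset α} (h : inClass H B R)
    {r : Rule α} (hr : r ∈ R) : r.pbody ⊆ B :=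
  fun x hx => h.2 (Finset.mem_biUnion.mpr ⟨r, hr, Finset.mem_union_left _ hx⟩)

/-- Transfer of satisfaction of a reduct along `⪯`-type conditions. -/
lemma reduct_sat_transfer {R : Program α} {H B Y X X' : Finset α}
    (hC : inClass H B R) (hX : satProg X (reduct R Y))
    (h1 : X ∩ H ⊆ X' ∩ H) (h2 : X' ∩ B ⊆ X ∩ B) :
    satProg X' (reduct R Y) := by
  intro r' hr'
  obtain ⟨r, hr, hn, rfl⟩ := mem_reduct.mp hr'
  intro hp _
  have hpX : r.pbody ⊆ X := by
    intro b hb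
    exact Finset.mem_of_mem_inter_left
      (h2 (Finset.mem_inter.mpr ⟨hp hb, pbody_subset_of_inClass hC hr hb⟩))
  obtain ⟨a, ha⟩ := hX _ hr' hpX (by simp)
  rw [Finset.mem_inter] at ha
  exact ⟨a, Finset.mem_inter.mpr ⟨ha.1,
    Finset.mem_of_mem_inter_left
      (h1 (Finset.mem_inter.mpr ⟨ha.2, head_subset_of_inClass hC hr ha.1⟩))⟩⟩

/-- The unary program used to realize a witness. -/
def Rw (H B X Y : Finset α) : Program α :=
  (X ∩ H).image (fun a => ⟨{a}, ∅, ∅⟩) ∪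
  (((Y \ X) ∩ H) ×ˢ ((Y \ X) ∩ B)).image (fun p => ⟨{p.1}, {p.2}, ∅⟩)

lemma mem_Rw {H B X Y : Finset α} {r : Rule α} :
    r ∈ Rw H B X Y ↔ (∃ a ∈ X ∩ H, r = ⟨{a}, ∅, ∅⟩) ∨
      (∃ a ∈ (Y \ X) ∩ H, ∃ b ∈ (Y \ X) ∩ B, r = ⟨{a}, {b}, ∅⟩) := by
  simp only [Rw, Finset.mem_union, Finset.mem_image, Finset.mem_product, Prod.exists]
  constructor
  · rintro (⟨a, ha, rfl⟩ | ⟨a, b, ⟨ha, hb⟩, rfl⟩)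
    · exact Or.inl ⟨a, ha, rfl⟩
    · exact Or.inr ⟨a, ha, b, hb, rfl⟩
  · rintro (⟨a, ha, rfl⟩ | ⟨a, ha, b, hb, rfl⟩)
    · exact Or.inl ⟨a, ha, rfl⟩
    · exact Or.inr ⟨a, b, ⟨ha, hb⟩, rfl⟩

lemma unary_Rw {H B X Y : Finset α} : Unary (Rw H B X Y) := by
  intro r hr
  rcases mem_Rw.mp hr with ⟨a, _, rfl⟩ | ⟨a, _, b, _, rfl⟩ <;> simp

lemma inClass_Rw {H B X Y : Finset α} : inClass H B (Rw H B X Y) := by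
  constructor
  · intro x hx
    obtain ⟨r, hr, hx⟩ := Finset.mem_biUnion.mp hx
    rcases mem_Rw.mp hr with ⟨a, ha, rfl⟩ | ⟨a, ha, b, hb, rfl⟩ <;>
      simp_all <;> subst hx <;> simp_all [Finset.mem_inter]
  · intro x hx
    obtain ⟨r, hr, hx⟩ := Finset.mem_biUnion.mp hx
    rcases mem_Rw.mp hr with ⟨a, ha, rfl⟩ | ⟨a, ha, b, hb, rfl⟩ <;>
      simp_all <;> subst hx <;> simp_all [Finset.mem_inter]

lemma reduct_Rw {H B X Y W : Finset α} : reduct (Rw H B X Y) W = Rw H B X Y := by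
  ext r
  rw [mem_reduct]
  constructor
  · rintro ⟨s, hs, -, rfl⟩
    rcases mem_Rw.mp hs with ⟨a, ha, rfl⟩ | ⟨a, ha, b, hb, rfl⟩
    · exact mem_Rw.mpr (Or.inl ⟨a, ha, rfl⟩)
    · exact mem_Rw.mpr (Or.inr ⟨a, ha, b, hb, rfl⟩)
  · intro hr
    refine ⟨r, hr, ?_, ?_⟩ <;>
      rcases mem_Rw.mp hr with ⟨a, ha, rfl⟩ | ⟨a, ha, b, hb, rfl⟩ <;> simp

lemma sat_fact {Z : Finset α} {a : α} : satRule Z ⟨{a}, ∅, ∅⟩ ↔ a ∈ Z := by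
  simp [satRule, Finset.Nonempty, Finset.mem_inter]

lemma sat_urule {Z : Finset α} {a b : α} : satRule Z ⟨{a}, {b}, ∅⟩ ↔ (b ∈ Z → a ∈ Z) := by
  simp [satRule, Finset.Nonempty, Finset.mem_inter, Finset.singleton_subset_iff]

lemma sat_Rw {H B X Y Z : Finset α} :
    satProg Z (Rw H B X Y) ↔ (X ∩ H ⊆ Z ∧
      ∀ a ∈ (Y \ X) ∩ H, ∀ b ∈ (Y \ X) ∩ B, b ∈ Z → a ∈ Z) := by
  constructor
  · intro h
    constructor
    · intro x hx
      exact sat_fact.mp (h _ (mem_Rw.mpr (Or.inl ⟨x, hx, rfl⟩)))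
    · intro a ha b hb hbz
      exact sat_urule.mp (h _ (mem_Rw.mpr (Or.inr ⟨a, ha, b, hb, rfl⟩))) hbz
  · rintro ⟨h1, h2⟩ r hr
    rcases mem_Rw.mp hr with ⟨a, ha, rfl⟩ | ⟨a, ha, b, hb, rfl⟩
    · exact sat_fact.mpr (h1 ha)
    · exact sat_urule.mpr (h2 a ha b hb)

/-- Main construction lemma: `Y` is an answer set of `P ∪ Rw H B X Y`. -/
lemma isAS_P_Rw {P : Program α} {H B X Y : Finset α}
    (ht : Htotal H P Y) (hXY : X ⊆ Y)
    (hmax : ∀ Z, Z ⊂ Y → satProg Z (reduct P Y) → ¬ preceq H B X Z) :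
    isAS (P ∪ Rw H B X Y) Y := by
  constructor
  · rw [satProg_reduct_self, satProg_union]
    refine ⟨ht.1, sat_Rw.mpr ⟨?_, ?_⟩⟩
    · exact (Finset.inter_subset_left).trans hXY
    · intro a ha b hb hbz
      exact (Finset.mem_sdiff.mp (Finset.mem_of_mem_inter_left ha)).1
  · intro Z hZ hZsat
    rw [reduct_union, satProg_union, reduct_Rw, sat_Rw] at hZsat
    obtain ⟨hZP, hfacts, hrules⟩ := hZsat
    by_cases hZB : Z ∩ B ⊆ X ∩ B
    · refine hmax Z hZ hZP ⟨?_, hZB⟩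
      intro x hx
      exact Finset.mem_inter.mpr ⟨hfacts hx, (Finset.mem_inter.mp hx).2⟩
    · -- there is b ∈ (Z ∩ B) \ X, then Y ∩ H ⊆ Z, contradicting Htotal
      rw [Finset.not_subset] at hZB
      obtain ⟨b, hbZB, hbX⟩ := hZB
      rw [Finset.mem_inter] at hbZB
      have hbX' : b ∉ X := fun h => hbX (Finset.mem_inter.mpr ⟨h, hbZB.2⟩)
      have hbYX : b ∈ (Y \ X) ∩ B :=
        Finset.mem_inter.mpr ⟨Finset.mem_sdiff.mpr ⟨hZ.subset hbZB.1, hbX'⟩, hbZB.2⟩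
      have hYH : Y ∩ H ⊆ Z := by
        intro a haYH
        rw [Finset.mem_inter] at haYH
        by_cases haX : a ∈ X
        · exact hfacts (Finset.mem_inter.mpr ⟨haX, haYH.2⟩)
        · exact hrules a (Finset.mem_inter.mpr ⟨Finset.mem_sdiff.mpr ⟨haYH.1, haX⟩, haYH.2⟩)
            b hbYX hbZB.1
      have := ht.2 Z hZ hZP
      have : Y ∩ H ⊆ Z ∩ H := fun x hx =>
        Finset.mem_inter.mpr ⟨hYH hx, (Finset.mem_inter.mp hx).2⟩
      exact absurd (ht.2 Z hZ hZP).2 (fun h => h this)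

/-- From failure of containment to a witness. -/
lemma not_contains_to_witness {P Q : Program α} {H B : Finset α}
    (h : ¬ containsHB H B P Q) : ∃ X Y, Witness H B P Q X Y := by
  rw [containsHB] at h
  push_neg at h
  obtain ⟨R, hRC, Y, hPAS, hQAS⟩ := h
  have hYPR : satProg Y (P ∪ R) := satProg_reduct_self.mp hPAS.1
  rw [satProg_union] at hYPR
  have htot : Htotal H P Y := by
    refine ⟨hYPR.1, fun Z hZ hZP => ?_⟩
    have hss : Z ∩ H ⊆ Y ∩ H := Finset.inter_subset_inter_right hZ.subset
    refine Finset.ssubset_iff_subset_ne.mpr ⟨hss, fun heq => ?_⟩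
    have hYR : satProg Y (reduct R Y) := satProg_reduct_self.mpr hYPR.2
    have hZR : satProg Z (reduct R Y) :=
      reduct_sat_transfer hRC hYR (le_of_eq heq.symm)
        (Finset.inter_subset_inter_right hZ.subset)
    exact hPAS.2 Z hZ (by rw [reduct_union, satProg_union]; exact ⟨hZP, hZR⟩)
  by_cases hYQ : satProg Y Q
  · -- Y satisfies Q ∪ R, so non-AS means minimality fails
    have hYQR : satProg Y (reduct (Q ∪ R) Y) :=
      satProg_reduct_self.mpr (satProg_union.mpr ⟨hYQ, hYPR.2⟩)
    rw [isAS] at hQAS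
    push_neg at hQAS
    obtain ⟨X, hXY, hXsat⟩ := hQAS hYQR
    rw [reduct_union, satProg_union] at hXsat
    refine ⟨X, Y, hXY.subset, htot, fun _ => ⟨hXY, hXsat.1, ?_⟩⟩
    intro X' hpre hX'Y hX'P
    have hX'R : satProg X' (reduct R Y) :=
      reduct_sat_transfer hRC hXsat.2 hpre.1 hpre.2
    exact hPAS.2 X' hX'Y (by rw [reduct_union, satProg_union]; exact ⟨hX'P, hX'R⟩)
  · exact ⟨Y, Y, subset_rfl, htot, fun hYQ' => absurd hYQ' hYQ⟩

/-- From a witness to a unary counterexample program. -/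
lemma witness_to_unary {P Q : Program α} {H B X Y : Finset α}
    (hW : Witness H B P Q X Y) :
    ∃ R : Program α, Unary R ∧ inClass H B R ∧
      ∃ Y, isAS (P ∪ R) Y ∧ ¬ isAS (Q ∪ R) Y := by
  obtain ⟨hXY, htot, hcond⟩ := hW
  by_cases hYQ : satProg Y Q
  · obtain ⟨hXssY, hXQ, hmax⟩ := hcond hYQ
    refine ⟨Rw H B X Y, unary_Rw, inClass_Rw, Y, ?_, ?_⟩
    · exact isAS_P_Rw htot hXY (fun Z hZ hZP hpre => hmax Z hpre hZ hZP)
    · intro hAS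
      refine hAS.2 X hXssY ?_
      rw [reduct_union, satProg_union, reduct_Rw, sat_Rw]
      refine ⟨hXQ, Finset.inter_subset_left, ?_⟩
      intro a ha b hb hbX
      exact absurd hbX (Finset.mem_sdiff.mp (Finset.mem_of_mem_inter_left hb)).2
  · refine ⟨Rw H B Y Y, unary_Rw, inClass_Rw, Y, ?_, ?_⟩
    · refine isAS_P_Rw htot subset_rfl (fun Z hZ hZP hpre => ?_)
      have hYH : Y ∩ H ⊆ Z ∩ H := hpre.1
      exact absurd (htot.2 Z hZ hZP).2 (fun h => h hYH)
    · intro hAS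
      have := satProg_reduct_self.mp hAS.1
      rw [satProg_union] at this
      exact hYQ this.1

theorem witness_lemma [Fintype α] (P Q : Program α) (H B : Finset α) :
    (¬ containsHB H B P Q ↔
      ∃ R : Program α, Unary R ∧ inClass H B R ∧
        ∃ Y, isAS (P ∪ R) Y ∧ ¬ isAS (Q ∪ R) Y) ∧
    (¬ containsHB H B P Q ↔ ∃ X Y, Witness H B P Q X Y) := by
  have hBA : (∃ R : Program α, Unary R ∧ inClass H B R ∧
      ∃ Y, isAS (P ∪ R) Y ∧ ¬ isAS (Q ∪ R) Y) → ¬ containsHB H B P Q := by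
    rintro ⟨R, -, hC, Y, h1, h2⟩ hcon
    exact h2 (hcon R hC Y h1)
  constructor
  · exact ⟨fun h => by
      obtain ⟨X, Y, hW⟩ := not_contains_to_witness h
      exact witness_to_unary hW, hBA⟩
  · exact ⟨not_contains_to_witness, fun ⟨X, Y, hW⟩ => hBA (witness_to_unary hW)⟩
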